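/- Let r be a positive integer and let a, ā be integers with (a−1)(ā−1) ≡ 1 (mod r). Set w := gcd(r,a), ℓ := r/w, and let ρ be the remainder of w modulo ℓ; assume ρ ≠ 0. Then there exists M ∈ GL(2,ℤ) with M·(ρℓ, 1 − ρ·(a/w)) = (0,1) and M·(0,1) = (ρℓ, 1 − ρ·(ā/w)). That is, the normalized residual cone computed from the description 1/r(1,a−1) of the singularity is lattice-isomorphic to the normalized residual cone computed from the description 1/r(1,ā−1): the residue of a cone is well defined up to lattice isomorphism, independently of the decomposition chosen. -/

import Mathlib

/-- With `(a-1)(ā-1) ≡ 1 (mod r)`, `w = gcd(r,a)`, `ℓ = r/w`,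
`ρ = w mod ℓ` and `ρ ≠ 0`, there exists `M ∈ GL(2,ℤ)` with
`M·(ρℓ, 1 - ρ·(a/w)) = (0,1)` and `M·(0,1) = (ρℓ, 1 - ρ·(ā/w))`: the normalized
residual cones computed from the two descriptions `1/r(1, a-1)` and `1/r(1, ā-1)`
of the singularity are lattice-isomorphic, so the residue of a cone is well defined
up to lattice isomorphism, independently of the decomposition chosen. -/
theorem stmt_9 (r a abar : ℤ) (hr : 0 < r)
    (h : (a - 1) * (abar - 1) ≡ 1 [ZMOD r])
    (w l ρ : ℤ) (hw : w = Int.gcd r a) (hl : l = r / w) (hρ : ρ = w % l)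
    (hρ0 : ρ ≠ 0) :
    ∃ M : Matrix (Fin 2) (Fin 2) ℤ, (M.det = 1 ∨ M.det = -1) ∧
      M.mulVec ![ρ * l, 1 - ρ * (a / w)] = ![0, 1] ∧
      M.mulVec ![0, 1] = ![ρ * l, 1 - ρ * (abar / w)] := by
  have hw0 : 0 < w := by
    rw [hw]
    exact_mod_cast Int.gcd_pos_of_ne_zero_left a hr.ne'
  have hwr : w ∣ r := hw ▸ Int.gcd_dvd_left r a
  have hwa : w ∣ a := hw ▸ Int.gcd_dvd_right r a
  have hdvd : r ∣ a * abar - (a + abar) := by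
    have := h.symm.dvd
    have heq : (a - 1) * (abar - 1) - 1 = a * abar - (a + abar) := by ring
    rwa [heq] at this
  have hwabar : w ∣ abar := by
    have h1 : w ∣ a * abar - (a + abar) := hwr.trans hdvd
    have h2 : w ∣ a * abar := Dvd.dvd.mul_right hwa abar
    have h3 : w ∣ a + abar := by
      have := dvd_sub h2 h1
      simpa using this
    have := dvd_sub h3 hwa
    simpa using this
  set A := a / w with hA
  set B := abar / w with hB
  have haA : a = w * A := (Int.ediv_mul_cancel hwa).symm.trans (by ring)
  have haB : abar = w * B := (Int.ediv_mul_cancel hwabar).symm.trans (by ring)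
  have hrl : r = w * l := by
    rw [hl]
    exact (Int.mul_ediv_cancel' hwr).symm
  -- l ∣ w*A*B - (A+B)
  have hX : l ∣ w * A * B - (A + B) := by
    have : w * l ∣ w * (w * A * B - (A + B)) := by
      rw [← hrl]
      have : a * abar - (a + abar) = w * (w * A * B - (A + B)) := by
        rw [haA, haB]; ring
      rw [← this]; exact hdvd
    exact (mul_dvd_mul_iff_left hw0.ne').mp this
  have hwρ : l ∣ w - ρ := by
    rw [hρ, Int.emod_def]
    exact ⟨w / l, by ring⟩
  have hkey : l ∣ (A + B) - ρ * A * B := by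
    have : (A + B) - ρ * A * B = (w - ρ) * (A * B) - (w * A * B - (A + B)) := by
      ring
    rw [this]
    exact dvd_sub (hwρ.mul_right _) hX
  obtain ⟨t, ht⟩ := hkey
  refine ⟨!![-(1 - ρ * A), ρ * l; t, 1 - ρ * B], ?_, ?_, ?_⟩
  · right
    simp [Matrix.det_fin_two_of]
    linear_combination ρ * ht
  · funext i
    fin_cases i
    · simp [Matrix.mulVec, Matrix.vecHead, Matrix.vecTail, Fin.sum_univ_two]
      ring
    · simp [Matrix.mulVec, Matrix.vecHead, Matrix.vecTail, Fin.sum_univ_two]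
      linear_combination -ρ * ht
  · funext i
    fin_cases i <;>
      simp [Matrix.mulVec, Matrix.vecHead, Matrix.vecTail, Fin.sum_univ_two]
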